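/- Let K be a commutative ring, X a set, L the free Lie algebra over K on X, and S a subset of X. Let 𝔰 be the Lie ideal of L generated by the generators indexed by X − S, and let W be the universal enveloping algebra of the free Lie algebra over K on S. The adjoint action of the generators ξ_s (s ∈ S) on 𝔰 preserves 𝔰 and descends to the abelianization 𝔰/[𝔰,𝔰], making 𝔰/[𝔰,𝔰] a module over W. Then 𝔰/[𝔰,𝔰] is a free W-module with basis the images of the generators ξ_x, x ∈ X − S; equivalently, the images in 𝔰/[𝔰,𝔰] of the iterated brackets [ξ_{s₁},[…,[ξ_{s_k}, ξ_x]…]] (words (s₁,…,s_k) in S, x ∈ X − S) form a K-basis of 𝔰/[𝔰,𝔰]. -/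

import Mathlib

open LieSubmodule

section

variable (K : Type*) [CommRing K] (L : Type*) [LieRing L] [LieAlgebra K L]

/-- The derived ideal `[I, I]` of a Lie ideal `I`, viewed as a Lie submodule (for the
ambient `L`-action) of `I`. -/
def derivedLieSubmodule (I : LieIdeal K L) : LieSubmodule K L I :=
  lieSpan K L {z : I | ∃ x y : I, (z : L) = ⁅(x : L), (y : L)⁆}

/-- The abelianization `I/[I,I]` of a Lie ideal `I`. -/
abbrev LieIdealAb (I : LieIdeal K L) : Type _ := I ⧸ derivedLieSubmodule K L I

end

/-- The Lie ideal `𝔰` of the free Lie algebra on `X` generated by the generators indexed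
by `X − S`. -/
noncomputable abbrev genIdeal (K : Type*) [CommRing K] (X : Type*) (S : Set X) :
    LieIdeal K (FreeLieAlgebra K X) :=
  lieSpan K (FreeLieAlgebra K X) (FreeLieAlgebra.of K '' Sᶜ)

/-- The iterated bracket `[ξ_{s₁},[…,[ξ_{s_k}, ξ_x]…]]`, an element of the ideal `𝔰`. -/
noncomputable def iterBracket (K : Type*) [CommRing K] (X : Type*) (S : Set X)
    (p : (List ↥S) × ↥(Sᶜ)) : ↥(genIdeal K X S) :=
  p.1.foldr (fun s m => ⁅FreeLieAlgebra.of K (s : X), m⁆)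
    ⟨FreeLieAlgebra.of K (p.2 : X),
      subset_lieSpan (Set.mem_image_of_mem _ p.2.2)⟩

namespace Elim

variable (K : Type*) [CommRing K] (X : Type*) (S : Set X)

/-- Free module on words. -/
abbrev N := ((List ↥S) × ↥(Sᶜ)) →₀ K

attribute [local instance 100] LieRing.ofAssociativeRing

/-- The action of the free Lie algebra on `S` on `N` by prepending. -/
noncomputable def rho : FreeLieAlgebra K ↥S →ₗ⁅K⁆ Module.End K (N K X S) :=
  FreeLieAlgebra.lift K fun s => Finsupp.lmapDomain K K (fun p => (s :: p.1, p.2))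

/-- Semidirect product (type synonym). -/
abbrev SD := FreeLieAlgebra K ↥S × N K X S

noncomputable instance : AddCommGroup (SD K X S) :=
  inferInstanceAs (AddCommGroup (FreeLieAlgebra K ↥S × N K X S))

noncomputable instance : Module K (SD K X S) :=
  inferInstanceAs (Module K (FreeLieAlgebra K ↥S × N K X S))

theorem sd_add_def (x y : SD K X S) : x + y = (x.1 + y.1, x.2 + y.2) := rfl
theorem sd_smul_def (t : K) (x : SD K X S) : t • x = (t • x.1, t • x.2) := rfl

noncomputable instance : LieRing (SD K X S) where
  bracket x y := (⁅x.1, y.1⁆, rho K X S x.1 y.2 - rho K X S y.1 x.2)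
  add_lie x y z := by
    show Prod.mk _ _ = _
    simp [sd_add_def, add_lie, Prod.ext_iff]
    abel
  lie_add x y z := by
    show Prod.mk _ _ = _
    simp [sd_add_def, lie_add, Prod.ext_iff]
    abel
  lie_self x := by
    show Prod.mk _ _ = _
    simp [Prod.ext_iff]
  leibniz_lie x y z := by
    show Prod.mk _ _ = (Prod.mk _ _) + (Prod.mk _ _)
    have h : ∀ a b : FreeLieAlgebra K ↥S, rho K X S ⁅a, b⁆ =
        rho K X S a * rho K X S b - rho K X S b * rho K X S a := by
      intro a b; rw [LieHom.map_lie]; rfl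
    simp only [Prod.mk_add_mk, Prod.ext_iff, h, LinearMap.sub_apply, Module.End.mul_apply,
      map_sub]
    constructor
    · exact leibniz_lie _ _ _
    · abel

noncomputable instance : LieAlgebra K (SD K X S) where
  lie_smul t x y := by
    show (⁅x.1, t • y.1⁆, rho K X S x.1 (t • y.2) - rho K X S (t • y.1) x.2) =
      t • ((⁅x.1, y.1⁆, rho K X S x.1 y.2 - rho K X S y.1 x.2) : SD K X S)
    rw [sd_smul_def]
    simp [smul_sub]

@[simp] theorem sd_bracket (x y : SD K X S) :
    ⁅x, y⁆ = (⁅x.1, y.1⁆, rho K X S x.1 y.2 - rho K X S y.1 x.2) := rfl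

/-- First projection as a Lie algebra morphism. -/
noncomputable def pi1 : SD K X S →ₗ⁅K⁆ FreeLieAlgebra K ↥S where
  toFun x := x.1
  map_add' _ _ := rfl
  map_smul' _ _ := rfl
  map_lie' := rfl

open Classical in
/-- The main morphism from the free Lie algebra on `X` to the semidirect product. -/
noncomputable def Phi : FreeLieAlgebra K X →ₗ⁅K⁆ SD K X S :=
  FreeLieAlgebra.lift K fun x =>
    if h : x ∈ S then ((FreeLieAlgebra.of K (⟨x, h⟩ : ↥S), 0) : SD K X S)
    else ((0, Finsupp.single (([], ⟨x, h⟩) : (List ↥S) × ↥(Sᶜ)) (1 : K)) : SD K X S)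

theorem Phi_of_mem {x : X} (h : x ∈ S) :
    Phi K X S (FreeLieAlgebra.of K x) = (FreeLieAlgebra.of K (⟨x, h⟩ : ↥S), 0) := by
  rw [Phi, FreeLieAlgebra.lift_of_apply]; exact dif_pos h

theorem Phi_of_not_mem {x : X} (h : x ∉ S) :
    Phi K X S (FreeLieAlgebra.of K x) =
      (0, Finsupp.single (([], ⟨x, h⟩) : (List ↥S) × ↥(Sᶜ)) (1 : K)) := by
  rw [Phi, FreeLieAlgebra.lift_of_apply]; exact dif_neg h

/-- `Φ` maps the ideal `𝔰` into `{0} × N`. -/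
theorem Phi_fst_eq_zero : ∀ z : ↥(genIdeal K X S), (Phi K X S (z : FreeLieAlgebra K X)).1 = 0 := by
  intro z
  have h : genIdeal K X S ≤ ((pi1 K X S).comp (Phi K X S)).ker := by
    apply lieSpan_le.mpr
    rintro _ ⟨x, hx, rfl⟩
    simp only [SetLike.mem_coe, LieHom.mem_ker, LieHom.comp_apply]
    rw [Phi_of_not_mem K X S hx]
    rfl
  exact h z.2

/-- The second component of `Φ`, restricted to `𝔰`, as a linear map. -/
noncomputable def psi0 : ↥(genIdeal K X S) →ₗ[K] N K X S where
  toFun z := (Phi K X S (z : FreeLieAlgebra K X)).2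
  map_add' z w := by
    show (Phi K X S ((z : FreeLieAlgebra K X) + (w : FreeLieAlgebra K X))).2 = _
    rw [map_add]; rfl
  map_smul' t z := by
    show (Phi K X S (t • (z : FreeLieAlgebra K X))).2 = _
    rw [map_smul]; rfl

theorem psi0_lie (a : FreeLieAlgebra K X) (z : ↥(genIdeal K X S)) :
    psi0 K X S ⁅a, z⁆ = rho K X S (Phi K X S a).1 (psi0 K X S z) := by
  show (Phi K X S ⁅a, (z : FreeLieAlgebra K X)⁆).2 = _
  rw [LieHom.map_lie]
  show rho K X S (Phi K X S a).1 (Phi K X S (z:FreeLieAlgebra K X)).2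
    - rho K X S (Phi K X S (z:FreeLieAlgebra K X)).1 (Phi K X S a).2 = _
  rw [Phi_fst_eq_zero K X S z]
  simp
  rfl

variable {K X S}

/-- The kernel of `psi0` is stable under the ambient adjoint action. -/
noncomputable def psiKer : LieSubmodule K (FreeLieAlgebra K X) ↥(genIdeal K X S) :=
  { LinearMap.ker (psi0 K X S) with
    lie_mem := by
      intro a z hz
      have hz' : psi0 K X S z = 0 := hz
      show ⁅a, z⁆ ∈ LinearMap.ker (psi0 K X S)
      rw [LinearMap.mem_ker, psi0_lie, hz', map_zero] }

theorem derived_le :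
    derivedLieSubmodule K (FreeLieAlgebra K X) (genIdeal K X S) ≤ psiKer (K := K) (X := X) (S := S) := by
  rw [derivedLieSubmodule]
  apply lieSpan_le.mpr
  rintro z ⟨x, y, hz⟩
  show z ∈ psiKer
  have hmem : z ∈ psiKer ↔ psi0 K X S z = 0 := Iff.rfl
  have : psi0 K X S z = (Phi K X S ⁅(x : FreeLieAlgebra K X), (y : FreeLieAlgebra K X)⁆).2 := by
    show (Phi K X S (z : FreeLieAlgebra K X)).2 = _
    rw [hz]
  rw [hmem, this, LieHom.map_lie]
  show rho K X S (Phi K X S (x:FreeLieAlgebra K X)).1 (Phi K X S (y:FreeLieAlgebra K X)).2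
    - rho K X S (Phi K X S (y:FreeLieAlgebra K X)).1 (Phi K X S (x:FreeLieAlgebra K X)).2 = 0
  rw [Phi_fst_eq_zero K X S x, Phi_fst_eq_zero K X S y]
  simp

variable (K X S)

/-- The induced map on the abelianization. -/
noncomputable def psi :
    LieIdealAb K (FreeLieAlgebra K X) (genIdeal K X S) →ₗ[K] N K X S :=
  Submodule.liftQ (derivedLieSubmodule K (FreeLieAlgebra K X) (genIdeal K X S)).toSubmodule
    (psi0 K X S) derived_le

theorem psi_mk (z : ↥(genIdeal K X S)) :
    psi K X S (LieSubmodule.Quotient.mk z) = psi0 K X S z := rfl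

theorem psi0_iterBracket (p : (List ↥S) × ↥(Sᶜ)) :
    psi0 K X S (iterBracket K X S p) = Finsupp.single p 1 := by
  obtain ⟨w, x⟩ := p
  induction w with
  | nil =>
    show (Phi K X S (FreeLieAlgebra.of K (x : X))).2 = _
    rw [Phi_of_not_mem K X S x.2]
  | cons s w ih =>
    show psi0 K X S ⁅FreeLieAlgebra.of K (s : X), iterBracket K X S (w, x)⁆ = _
    rw [psi0_lie, ih, Phi_of_mem K X S s.2]
    show rho K X S (FreeLieAlgebra.of K (⟨(s : X), s.2⟩ : ↥S)) (Finsupp.single (w, x) 1) = _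
    rw [rho, FreeLieAlgebra.lift_of_apply]
    show Finsupp.mapDomain _ _ = _
    rw [Finsupp.mapDomain_single]

/-- The basis family: images of iterated brackets in the abelianization. -/
noncomputable def fB (p : (List ↥S) × ↥(Sᶜ)) :
    LieIdealAb K (FreeLieAlgebra K X) (genIdeal K X S) :=
  LieSubmodule.Quotient.mk (iterBracket K X S p)

theorem fB_indep : LinearIndependent K (fB K X S) := by
  apply LinearIndependent.of_comp (psi K X S)
  have h : (psi K X S ∘ fB K X S) = fun p => Finsupp.single p (1 : K) := by
    funext p
    show psi K X S (fB K X S p) = _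
    rw [fB, psi_mk, psi0_iterBracket]
  rw [h]
  have := (Finsupp.basisSingleOne (R := K) (ι := (List ↥S) × ↥(Sᶜ))).linearIndependent
  rwa [Finsupp.coe_basisSingleOne] at this

theorem lie_fB (s : ↥S) (p : (List ↥S) × ↥(Sᶜ)) :
    ⁅FreeLieAlgebra.of K (s : X), fB K X S p⁆ = fB K X S (s :: p.1, p.2) := by
  obtain ⟨w, x⟩ := p
  show _ = LieSubmodule.Quotient.mk' _ ⁅FreeLieAlgebra.of K (s : X), iterBracket K X S (w, x)⁆
  rw [LieModuleHom.map_lie]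
  rfl

theorem lie_fB_zero {x : X} (hx : x ∉ S) (v : ↥(genIdeal K X S)) :
    ⁅FreeLieAlgebra.of K x, (LieSubmodule.Quotient.mk v :
      LieIdealAb K (FreeLieAlgebra K X) (genIdeal K X S))⁆ = 0 := by
  rw [show (LieSubmodule.Quotient.mk v :
      LieIdealAb K (FreeLieAlgebra K X) (genIdeal K X S)) =
      LieSubmodule.Quotient.mk' _ v from rfl, ← LieModuleHom.map_lie]
  rw [show LieSubmodule.Quotient.mk' _ ⁅FreeLieAlgebra.of K x, v⁆ =
      LieSubmodule.Quotient.mk (N := derivedLieSubmodule K (FreeLieAlgebra K X) (genIdeal K X S))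
        ⁅FreeLieAlgebra.of K x, v⁆ from rfl]
  rw [LieSubmodule.Quotient.mk_eq_zero']
  apply subset_lieSpan
  exact ⟨⟨FreeLieAlgebra.of K x, subset_lieSpan (Set.mem_image_of_mem _ hx)⟩, v, rfl⟩

/-- Elements whose adjoint action preserves the span of the `fB`. -/
noncomputable def adStable : LieSubalgebra K (FreeLieAlgebra K X) where
  carrier := {a | ∀ m ∈ Submodule.span K (Set.range (fB K X S)), ⁅a, m⁆ ∈
    Submodule.span K (Set.range (fB K X S))}
  add_mem' := fun ha hb m hm => by
    rw [add_lie]; exact Submodule.add_mem _ (ha m hm) (hb m hm)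
  zero_mem' := fun m hm => by rw [zero_lie]; exact Submodule.zero_mem _
  smul_mem' := fun t a ha m hm => by rw [smul_lie]; exact Submodule.smul_mem _ t (ha m hm)
  lie_mem' := fun {a b} ha hb m hm => by
    rw [lie_lie]; exact Submodule.sub_mem _ (ha _ (hb m hm)) (hb _ (ha m hm))

theorem of_mem_adStable (x : X) : FreeLieAlgebra.of K x ∈ adStable K X S := by
  by_cases h : x ∈ S
  · intro m hm
    induction hm using Submodule.span_induction with
    | mem m hm =>
      obtain ⟨p, rfl⟩ := hm
      have : FreeLieAlgebra.of K x = FreeLieAlgebra.of K ((⟨x, h⟩ : ↥S) : X) := rfl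
      rw [this, lie_fB]
      exact Submodule.subset_span ⟨_, rfl⟩
    | zero => rw [lie_zero]; exact Submodule.zero_mem _
    | add u v _ _ hu hv => rw [lie_add]; exact Submodule.add_mem _ hu hv
    | smul t u _ hu => rw [lie_smul]; exact Submodule.smul_mem _ t hu
  · intro m hm
    obtain ⟨v, rfl⟩ := LieSubmodule.Quotient.surjective_mk'
      (derivedLieSubmodule K (FreeLieAlgebra K X) (genIdeal K X S)) m
    rw [show LieSubmodule.Quotient.mk' _ v = LieSubmodule.Quotient.mk
      (N := derivedLieSubmodule K (FreeLieAlgebra K X) (genIdeal K X S)) v from rfl]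
    rw [lie_fB_zero K X S h]
    exact Submodule.zero_mem _

theorem all_mem_adStable (a : FreeLieAlgebra K X) : a ∈ adStable K X S := by
  let j : FreeLieAlgebra K X →ₗ⁅K⁆ ↥(adStable K X S) :=
    FreeLieAlgebra.lift K fun x => ⟨FreeLieAlgebra.of K x, of_mem_adStable K X S x⟩
  have hj : (adStable K X S).incl.comp j = LieHom.id := by
    apply FreeLieAlgebra.hom_ext
    intro x
    show ((adStable K X S).incl (j (FreeLieAlgebra.of K x)) : FreeLieAlgebra K X) = _
    rw [show j (FreeLieAlgebra.of K x) = ⟨FreeLieAlgebra.of K x, of_mem_adStable K X S x⟩ from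
      FreeLieAlgebra.lift_of_apply _ x]
    rfl
  have : ((adStable K X S).incl (j a) : FreeLieAlgebra K X) = a := by
    have := congrArg (fun F => F a) hj
    exact this
  rw [← this]
  exact (j a).2

/-- The span of the `fB` as a Lie submodule. -/
noncomputable def spanFB :
    LieSubmodule K (FreeLieAlgebra K X) (LieIdealAb K (FreeLieAlgebra K X) (genIdeal K X S)) :=
  { Submodule.span K (Set.range (fB K X S)) with
    lie_mem := fun {a m} hm => all_mem_adStable K X S a m hm }

theorem fB_span (z : ↥(genIdeal K X S)) :
    (LieSubmodule.Quotient.mk z : LieIdealAb K (FreeLieAlgebra K X) (genIdeal K X S)) ∈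
      Submodule.span K (Set.range (fB K X S)) := by
  set C : LieSubmodule K (FreeLieAlgebra K X) ↥(genIdeal K X S) :=
    (spanFB K X S).comap
      (LieSubmodule.Quotient.mk' (derivedLieSubmodule K (FreeLieAlgebra K X) (genIdeal K X S)))
    with hC
  have hzC : z ∈ C := by
    set D := LieSubmodule.map (LieSubmodule.incl (genIdeal K X S)) C with hD
    have hgen : genIdeal K X S ≤ D := by
      apply lieSpan_le.mpr
      rintro _ ⟨x, hx, rfl⟩
      refine ⟨⟨FreeLieAlgebra.of K x, subset_lieSpan (Set.mem_image_of_mem _ hx)⟩, ?_, rfl⟩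
      show LieSubmodule.Quotient.mk' _ _ ∈ spanFB K X S
      exact Submodule.subset_span ⟨(([], ⟨x, hx⟩) : (List ↥S) × ↥(Sᶜ)), rfl⟩
    obtain ⟨w, hw, hwz⟩ := hgen z.2
    have : w = z := Subtype.ext hwz
    rwa [this] at hw
  exact hzC

end Elim

/-- Let `𝔰` be the Lie ideal of the free Lie algebra over `K` on `X` generated by the
generators indexed by `X − S`.  Then the abelianization `𝔰/[𝔰,𝔰]` is a free module over the
enveloping algebra `W` of the free Lie algebra on `S` with basis the images of the `ξ_x`,
`x ∈ X − S`; equivalently, the images in `𝔰/[𝔰,𝔰]` of the iterated brackets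
`[ξ_{s₁},[…,[ξ_{s_k}, ξ_x]…]]`, indexed by words in `S` and elements `x ∈ X − S`, form a
`K`-basis of `𝔰/[𝔰,𝔰]`. -/
theorem elimination_corollary (K : Type*) [CommRing K] (X : Type*) (S : Set X) :
    ∃ b : Module.Basis ((List ↥S) × ↥(Sᶜ)) K
        (LieIdealAb K (FreeLieAlgebra K X) (genIdeal K X S)),
      ∀ p : (List ↥S) × ↥(Sᶜ),
        b p = LieSubmodule.Quotient.mk (iterBracket K X S p) := by
  have hspan : ⊤ ≤ Submodule.span K (Set.range (Elim.fB K X S)) := by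
    intro m _
    obtain ⟨v, rfl⟩ := LieSubmodule.Quotient.surjective_mk'
      (derivedLieSubmodule K (FreeLieAlgebra K X) (genIdeal K X S)) m
    exact Elim.fB_span K X S v
  refine ⟨Module.Basis.mk (Elim.fB_indep K X S) hspan, fun p => ?_⟩
  rw [Module.Basis.mk_apply]
  rfl
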